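/- Let (X, 𝒜, μ) be a monotone measure space, f : X → [0, ∞] measurable and A ∈ 𝒜. If f = 0 μ-a.e. on A, i.e. μ({x ∈ A : f(x) ≠ 0}) = 0, then ∫_A^pan f dμ = 0. Moreover, if μ is continuous from below, then ∫_A^pan f dμ = 0 if and only if f = 0 μ-a.e. on A. -/

import Mathlib

open Set Filter
open scoped ENNReal NNReal Topology

variable {X : Type*}

/-- A monotone measure: vanishes on the empty set, positive on the whole space,
and monotone on measurable sets. -/
structure MonotoneMeasure [MeasurableSpace X] (mu : Set X → ℝ≥0∞) : Prop where
  empty : mu ∅ = 0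
  univ_pos : 0 < mu Set.univ
  mono : ∀ ⦃A B : Set X⦄, MeasurableSet A → MeasurableSet B → A ⊆ B → mu A ≤ mu B

/-- A finite measurable partition of `X`. -/
def IsPanPartition [MeasurableSpace X] {n : ℕ} (A : Fin n → Set X) : Prop :=
  (∀ i, MeasurableSet (A i)) ∧ Pairwise (Function.onFun Disjoint A) ∧ (⋃ i, A i) = Set.univ

/-- The `(+,·)`-based pan-integral of a nonnegative function on `X`. -/
noncomputable def panIntegral [MeasurableSpace X] (mu : Set X → ℝ≥0∞) (f : X → ℝ≥0∞) : ℝ≥0∞ :=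
  ⨆ (n : ℕ) (A : Fin n → Set X) (_ : IsPanPartition A) (lam : Fin n → ℝ≥0)
    (_ : ∀ x, ∑ i, Set.indicator (A i) (fun _ => (lam i : ℝ≥0∞)) x ≤ f x),
    ∑ i, (lam i : ℝ≥0∞) * mu (A i)

/-- The pan-integral of `f` on a set `A`, i.e. the pan-integral of `f·χ_A` on `X`. -/
noncomputable def panIntegralOn [MeasurableSpace X] (mu : Set X → ℝ≥0∞) (f : X → ℝ≥0∞)
    (A : Set X) : ℝ≥0∞ :=
  panIntegral mu (A.indicator f)

/-- Subadditivity of a set function. -/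
def PanSubadditive [MeasurableSpace X] (mu : Set X → ℝ≥0∞) : Prop :=
  ∀ ⦃A B : Set X⦄, MeasurableSet A → MeasurableSet B → mu (A ∪ B) ≤ mu A + mu B

/-- Null-additivity of a set function. -/
def PanNullAdditive [MeasurableSpace X] (mu : Set X → ℝ≥0∞) : Prop :=
  ∀ ⦃A B : Set X⦄, MeasurableSet A → MeasurableSet B → mu B = 0 → mu (A ∪ B) = mu A

/-- Continuity from below of a set function. -/
def PanContinuousFromBelow [MeasurableSpace X] (mu : Set X → ℝ≥0∞) : Prop :=
  ∀ E : ℕ → Set X, (∀ n, MeasurableSet (E n)) → Monotone E →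
    Filter.Tendsto (fun n => mu (E n)) Filter.atTop (nhds (mu (⋃ n, E n)))

/-- A real-valued function is pan-integrable if the pan-integrals of its
positive and negative parts are both finite. -/
def PanIntegrable [MeasurableSpace X] (mu : Set X → ℝ≥0∞) (f : X → ℝ) : Prop :=
  panIntegral mu (fun x => ENNReal.ofReal (f x)) < ⊤ ∧
    panIntegral mu (fun x => ENNReal.ofReal (-f x)) < ⊤

/-- The symmetric pan-integral of a real-valued function:
`∫ f⁺ dμ − ∫ f⁻ dμ`. -/
noncomputable def panIntegralReal [MeasurableSpace X] (mu : Set X → ℝ≥0∞) (f : X → ℝ) : ℝ :=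
  (panIntegral mu (fun x => ENNReal.ofReal (f x))).toReal -
    (panIntegral mu (fun x => ENNReal.ofReal (-f x))).toReal

/-- The `‖·‖_{μ,p}` functional: `(∫_E^pan |f|^p dμ)^(1/p)`. -/
noncomputable def panNorm [MeasurableSpace X] (mu : Set X → ℝ≥0∞) (E : Set X) (p : ℝ)
    (f : X → ℝ) : ℝ≥0∞ :=
  (panIntegralOn mu (fun x => ENNReal.ofReal (|f x| ^ p)) E) ^ (1 / p)


private lemma pan_aux_zero [MeasurableSpace X]
    {mu : Set X → ℝ≥0∞} (hmu : MonotoneMeasure mu)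
    {f : X → ℝ≥0∞} (hf : Measurable f)
    {A : Set X} (hA : MeasurableSet A)
    (h : mu {x | x ∈ A ∧ f x ≠ 0} = 0) : panIntegralOn mu f A = 0 := by
  have hN : MeasurableSet {x | x ∈ A ∧ f x ≠ 0} := by
    have he : {x | x ∈ A ∧ f x ≠ 0} = A ∩ (f ⁻¹' {0})ᶜ := by
      ext x
      simp only [Set.mem_setOf_eq, Set.mem_inter_iff, Set.mem_compl_iff, Set.mem_preimage,
        Set.mem_singleton_iff]
    rw [he]; exact hA.inter (hf (measurableSet_singleton 0)).compl
  rw [panIntegralOn, panIntegral]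
  refine le_antisymm ?_ zero_le
  refine iSup_le fun n => iSup_le fun B => iSup_le fun hB => iSup_le fun lam =>
    iSup_le fun hle => le_of_eq ?_
  refine Finset.sum_eq_zero fun i _ => ?_
  rcases eq_or_ne (lam i) 0 with h0 | h0
  · simp [h0]
  · have hsub : B i ⊆ {x | x ∈ A ∧ f x ≠ 0} := by
      intro x hx
      have h1 : (lam i : ℝ≥0∞) ≤ ∑ j, Set.indicator (B j) (fun _ => (lam j : ℝ≥0∞)) x := by
        have := Finset.single_le_sum
          (f := fun j => Set.indicator (B j) (fun _ => (lam j : ℝ≥0∞)) x)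
          (fun j _ => zero_le) (Finset.mem_univ i)
        simpa [Set.indicator_of_mem hx] using this
      have h2 : (lam i : ℝ≥0∞) ≤ A.indicator f x := h1.trans (hle x)
      have hpos : (0 : ℝ≥0∞) < A.indicator f x :=
        lt_of_lt_of_le (by simpa using pos_iff_ne_zero.2 (ENNReal.coe_ne_zero.2 h0)) h2
      by_cases hxA : x ∈ A
      · refine ⟨hxA, ?_⟩
        have := hpos
        rw [Set.indicator_of_mem hxA] at this
        exact this.ne'
      · rw [Set.indicator_of_notMem hxA] at hpos; exact absurd hpos (lt_irrefl 0)
    have : mu (B i) = 0 :=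
      le_antisymm (h ▸ hmu.mono (hB.1 i) hN hsub) zero_le
    simp [this]

theorem panIntegralOn_eq_zero_of_ae_zero_and_iff [MeasurableSpace X]
    (mu : Set X → ℝ≥0∞) (hmu : MonotoneMeasure mu)
    (f : X → ℝ≥0∞) (hf : Measurable f)
    {A : Set X} (hA : MeasurableSet A) :
    (mu {x | x ∈ A ∧ f x ≠ 0} = 0 → panIntegralOn mu f A = 0) ∧
      (PanContinuousFromBelow mu →
        (panIntegralOn mu f A = 0 ↔ mu {x | x ∈ A ∧ f x ≠ 0} = 0)) := by
  refine ⟨pan_aux_zero hmu hf hA, fun hcont => ⟨fun hzero => ?_, pan_aux_zero hmu hf hA⟩⟩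
  -- forward direction
  set E : ℕ → Set X := fun n => A ∩ {x | (((n : ℝ≥0) + 1)⁻¹ : ℝ≥0∞) ≤ f x} with hE
  have hEmeas : ∀ n, MeasurableSet (E n) := fun n =>
    hA.inter (hf measurableSet_Ici)
  have hEmono : Monotone E := by
    intro n m hnm x hx
    refine ⟨hx.1, ?_⟩
    have h1 : ((n : ℝ≥0) : ℝ≥0∞) + 1 ≤ ((m : ℝ≥0) : ℝ≥0∞) + 1 := by gcongr
    exact le_trans (ENNReal.inv_le_inv.2 h1) hx.2
  have hEzero : ∀ n, mu (E n) = 0 := by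
    intro n
    set c : ℝ≥0 := ((n : ℝ≥0) + 1)⁻¹ with hc
    have hc0 : c ≠ 0 := by positivity
    -- the two-set partition
    set B : Fin 2 → Set X := ![E n, (E n)ᶜ] with hB
    have hpart : IsPanPartition B := by
      refine ⟨?_, ?_, ?_⟩
      · intro i; fin_cases i
        · exact hEmeas n
        · exact (hEmeas n).compl
      · intro i j hij
        fin_cases i <;> fin_cases j
        · exact absurd rfl hij
        · simpa [Function.onFun, hB] using disjoint_compl_right
        · simpa [Function.onFun, hB] using disjoint_compl_left
        · exact absurd rfl hij
      · ext x
        simp only [Set.mem_iUnion, Set.mem_univ, iff_true, Fin.exists_fin_two, hB,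
          Matrix.cons_val_zero, Matrix.cons_val_one, Matrix.head_cons, Set.mem_compl_iff]
        exact em _
    set lam : Fin 2 → ℝ≥0 := ![c, 0] with hlam
    have hle : ∀ x, ∑ i, Set.indicator (B i) (fun _ => (lam i : ℝ≥0∞)) x ≤ A.indicator f x := by
      intro x
      rw [Fin.sum_univ_two]
      simp only [hB, hlam, Matrix.cons_val_zero, Matrix.cons_val_one, Matrix.head_cons,
        ENNReal.coe_zero]
      by_cases hx : x ∈ E n
      · rw [Set.indicator_of_mem hx]
        have hxA : x ∈ A := hx.1
        have hxf : ((c : ℝ≥0∞)) ≤ f x := by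
          have h2 := hx.2
          simp only [hE, Set.mem_setOf_eq] at h2
          rw [hc, ENNReal.coe_inv (by positivity)]
          push_cast
          exact h2
        rw [Set.indicator_of_mem hxA]
        simpa using hxf
      · rw [Set.indicator_of_notMem hx]
        simp
    have hkey : (c : ℝ≥0∞) * mu (E n) ≤ panIntegralOn mu f A := by
      rw [panIntegralOn, panIntegral]
      refine le_iSup_of_le 2 (le_iSup_of_le B (le_iSup_of_le hpart
        (le_iSup_of_le lam (le_iSup_of_le hle ?_))))
      rw [Fin.sum_univ_two]
      simp [hB, hlam]
    rw [hzero] at hkey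
    have := le_antisymm hkey zero_le
    rcases mul_eq_zero.1 this with h | h
    · exact absurd h (by simpa using hc0)
    · exact h
  have hUnion : (⋃ n, E n) = {x | x ∈ A ∧ f x ≠ 0} := by
    ext x
    simp only [Set.mem_iUnion, hE, Set.mem_inter_iff, Set.mem_setOf_eq]
    constructor
    · rintro ⟨n, hxA, hxf⟩
      refine ⟨hxA, ?_⟩
      intro h0
      rw [h0] at hxf
      exact absurd hxf (by simp)
    · rintro ⟨hxA, hxf⟩
      obtain ⟨n, hn⟩ := ENNReal.exists_inv_nat_lt hxf
      refine ⟨n, hxA, le_trans ?_ hn.le⟩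
      have h1 : ((n : ℕ) : ℝ≥0∞) ≤ ((n : ℝ≥0) : ℝ≥0∞) + 1 := by
        push_cast; exact le_self_add
      exact ENNReal.inv_le_inv.2 h1
  have htend := hcont E hEmeas hEmono
  simp only [hEzero] at htend
  rw [hUnion] at htend
  exact tendsto_nhds_unique htend tendsto_const_nhds
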